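/- Let B₀ ∈ ℝ^{n×n} be symmetric positive definite, P symmetric positive semidefinite with λₙ(P) = 0, H ∈ ℝ^{p×n} a selection matrix (each row one unit entry, distinct columns), R = σ_R² I_p, β ∈ [0,1), B = (1-β)B₀ + βP, and S = B⁻¹ + HᵀR⁻¹H. Then κ(S) ≤ κ(B₀)(1 + βλ₁(P)/((1-β)λ₁(B₀))) + ((1-β)λ₁(B₀) + βλ₁(P))/σ_R². -/

import Mathlib

open Matrix

noncomputable def lam1 {ι : Type*} [Fintype ι] [DecidableEq ι] (A : Matrix ι ι ℝ) : ℝ :=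
  sSup (spectrum ℝ A)

noncomputable def lamn {ι : Type*} [Fintype ι] [DecidableEq ι] (A : Matrix ι ι ℝ) : ℝ :=
  sInf (spectrum ℝ A)

section helpers

variable {m : ℕ}

lemma dp_self_nonneg (v : Fin m → ℝ) : 0 ≤ v ⬝ᵥ v :=
  Finset.sum_nonneg fun i _ => mul_self_nonneg _

lemma dp_self_pos {v : Fin m → ℝ} (hv : v ≠ 0) : 0 < v ⬝ᵥ v :=
  lt_of_le_of_ne (dp_self_nonneg v) fun h => hv (dotProduct_self_eq_zero.mp h.symm)

lemma mem_spec_iff {A : Matrix (Fin m) (Fin m) ℝ} {μ : ℝ} :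
    μ ∈ spectrum ℝ A ↔ ∃ v, v ≠ 0 ∧ A *ᵥ v = μ • v := by
  rw [spectrum.mem_iff]
  have hrw : ∀ v : Fin m → ℝ, (μ • (1 : Matrix (Fin m) (Fin m) ℝ) - A) *ᵥ v = μ • v - A *ᵥ v := by
    intro v
    rw [sub_mulVec, smul_mulVec, one_mulVec]
  constructor
  · intro h
    have hdet : (μ • (1 : Matrix (Fin m) (Fin m) ℝ) - A).det = 0 := by
      by_contra hd
      exact h (by
        rw [Algebra.algebraMap_eq_smul_one]
        exact (Matrix.isUnit_iff_isUnit_det _).mpr (isUnit_iff_ne_zero.mpr hd))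
    obtain ⟨v, hv, hv0⟩ := (Matrix.exists_mulVec_eq_zero_iff).mpr hdet
    refine ⟨v, hv, ?_⟩
    rw [hrw, sub_eq_zero] at hv0
    exact hv0.symm
  · rintro ⟨v, hv, hAv⟩
    intro hu
    rw [Algebra.algebraMap_eq_smul_one, Matrix.isUnit_iff_isUnit_det, isUnit_iff_ne_zero] at hu
    apply hu
    rw [← Matrix.exists_mulVec_eq_zero_iff]
    exact ⟨v, hv, by rw [hrw, hAv, sub_self]⟩

lemma spec_nonempty (hm : 0 < m) {A : Matrix (Fin m) (Fin m) ℝ} (hA : A.IsHermitian) :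
    (spectrum ℝ A).Nonempty := by
  haveI : Nonempty (Fin m) := ⟨⟨0, hm⟩⟩
  rw [Matrix.IsHermitian.spectrum_real_eq_range_eigenvalues hA]
  exact Set.range_nonempty _

lemma spec_finite (A : Matrix (Fin m) (Fin m) ℝ) : (spectrum ℝ A).Finite :=
  Matrix.finite_real_spectrum

lemma lam1_mem (hm : 0 < m) {A : Matrix (Fin m) (Fin m) ℝ} (hA : A.IsHermitian) : lam1 A ∈ spectrum ℝ A :=
  Set.Nonempty.csSup_mem (spec_nonempty hm hA) (spec_finite A)

lemma lamn_mem (hm : 0 < m) {A : Matrix (Fin m) (Fin m) ℝ} (hA : A.IsHermitian) : lamn A ∈ spectrum ℝ A :=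
  Set.Nonempty.csInf_mem (spec_nonempty hm hA) (spec_finite A)

lemma le_lam1 {A : Matrix (Fin m) (Fin m) ℝ} {μ : ℝ} (hμ : μ ∈ spectrum ℝ A) : μ ≤ lam1 A :=
  le_csSup (Set.Finite.bddAbove (spec_finite A)) hμ

lemma lamn_le {A : Matrix (Fin m) (Fin m) ℝ} {μ : ℝ} (hμ : μ ∈ spectrum ℝ A) : lamn A ≤ μ :=
  csInf_le (Set.Finite.bddBelow (spec_finite A)) hμ

lemma quad_eq_of_eig {A : Matrix (Fin m) (Fin m) ℝ} {μ : ℝ} {v : Fin m → ℝ}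
    (hAv : A *ᵥ v = μ • v) : v ⬝ᵥ A *ᵥ v = μ * (v ⬝ᵥ v) := by
  rw [hAv, dotProduct_smul, smul_eq_mul]

lemma spec_pos {A : Matrix (Fin m) (Fin m) ℝ} (hA : A.PosDef) {μ : ℝ}
    (hμ : μ ∈ spectrum ℝ A) : 0 < μ := by
  obtain ⟨v, hv, hAv⟩ := mem_spec_iff.mp hμ
  have h1 : 0 < v ⬝ᵥ A *ᵥ v := by simpa using hA.dotProduct_mulVec_pos hv
  rw [quad_eq_of_eig hAv] at h1
  rcases mul_pos_iff.mp h1 with h | h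
  · exact h.1
  · exact absurd (dp_self_pos hv) (not_lt.mpr h.2.le)

end helpers
section quad
variable {m : ℕ}

lemma quad_le_lam1 (hm : 0 < m) {A : Matrix (Fin m) (Fin m) ℝ} (hA : A.IsHermitian)
    (x : Fin m → ℝ) : x ⬝ᵥ A *ᵥ x ≤ lam1 A * (x ⬝ᵥ x) := by
  set c := lam1 A with hc
  have hM : (c • (1 : Matrix (Fin m) (Fin m) ℝ) - A).IsHermitian := by
    unfold Matrix.IsHermitian
    rw [conjTranspose_sub, conjTranspose_smul, conjTranspose_one, hA.eq, star_trivial]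
  have hspec : ∀ μ ∈ spectrum ℝ (c • (1 : Matrix (Fin m) (Fin m) ℝ) - A), 0 ≤ μ := by
    intro μ hμ
    obtain ⟨v, hv, hAv⟩ := mem_spec_iff.mp hμ
    rw [sub_mulVec, smul_mulVec, one_mulVec, sub_eq_iff_eq_add] at hAv
    have hAv' : A *ᵥ v = (c - μ) • v := by
      rw [sub_smul]
      rw [hAv]  -- c • v = μ • v + A *ᵥ v
      abel
    have : c - μ ≤ c := le_lam1 (mem_spec_iff.mpr ⟨v, hv, hAv'⟩)
    linarith
  have hpsd : (c • (1 : Matrix (Fin m) (Fin m) ℝ) - A).PosSemidef :=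
    hM.posSemidef_iff_eigenvalues_nonneg.mpr fun i =>
      hspec _ (hM.eigenvalues_mem_spectrum_real i)
  have h0 : 0 ≤ x ⬝ᵥ (c • (1 : Matrix (Fin m) (Fin m) ℝ) - A) *ᵥ x := by
    simpa using hpsd.dotProduct_mulVec_nonneg x
  rw [sub_mulVec, smul_mulVec, one_mulVec, dotProduct_sub, dotProduct_smul,
    smul_eq_mul] at h0
  linarith

lemma lamn_le_quad (hm : 0 < m) {A : Matrix (Fin m) (Fin m) ℝ} (hA : A.IsHermitian)
    (x : Fin m → ℝ) : lamn A * (x ⬝ᵥ x) ≤ x ⬝ᵥ A *ᵥ x := by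
  set c := lamn A with hc
  have hM : (A - c • (1 : Matrix (Fin m) (Fin m) ℝ)).IsHermitian := by
    unfold Matrix.IsHermitian
    rw [conjTranspose_sub, conjTranspose_smul, conjTranspose_one, hA.eq, star_trivial]
  have hspec : ∀ μ ∈ spectrum ℝ (A - c • (1 : Matrix (Fin m) (Fin m) ℝ)), 0 ≤ μ := by
    intro μ hμ
    obtain ⟨v, hv, hAv⟩ := mem_spec_iff.mp hμ
    rw [sub_mulVec, smul_mulVec, one_mulVec, sub_eq_iff_eq_add] at hAv
    have hAv' : A *ᵥ v = (μ + c) • v := by rw [add_smul, hAv]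
    have : c ≤ μ + c := lamn_le (mem_spec_iff.mpr ⟨v, hv, hAv'⟩)
    linarith
  have hpsd : (A - c • (1 : Matrix (Fin m) (Fin m) ℝ)).PosSemidef :=
    hM.posSemidef_iff_eigenvalues_nonneg.mpr fun i =>
      hspec _ (hM.eigenvalues_mem_spectrum_real i)
  have h0 : 0 ≤ x ⬝ᵥ (A - c • (1 : Matrix (Fin m) (Fin m) ℝ)) *ᵥ x := by
    simpa using hpsd.dotProduct_mulVec_nonneg x
  rw [sub_mulVec, smul_mulVec, one_mulVec, dotProduct_sub, dotProduct_smul,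
    smul_eq_mul] at h0
  linarith

lemma lam1_le_of_quad (hm : 0 < m) {A : Matrix (Fin m) (Fin m) ℝ} (hA : A.IsHermitian)
    {c : ℝ} (h : ∀ x : Fin m → ℝ, x ⬝ᵥ A *ᵥ x ≤ c * (x ⬝ᵥ x)) : lam1 A ≤ c := by
  obtain ⟨v, hv, hAv⟩ := mem_spec_iff.mp (lam1_mem hm hA)
  have h1 := h v
  rw [quad_eq_of_eig hAv] at h1
  exact le_of_mul_le_mul_right (by linarith) (dp_self_pos hv)

lemma le_lamn_of_quad (hm : 0 < m) {A : Matrix (Fin m) (Fin m) ℝ} (hA : A.IsHermitian)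
    {c : ℝ} (h : ∀ x : Fin m → ℝ, c * (x ⬝ᵥ x) ≤ x ⬝ᵥ A *ᵥ x) : c ≤ lamn A := by
  obtain ⟨v, hv, hAv⟩ := mem_spec_iff.mp (lamn_mem hm hA)
  have h1 := h v
  rw [quad_eq_of_eig hAv] at h1
  exact le_of_mul_le_mul_right (by linarith) (dp_self_pos hv)

end quad
noncomputable def condNum {ι : Type*} [Fintype ι] [DecidableEq ι] (A : Matrix ι ι ℝ) : ℝ :=
  lam1 A / lamn A

theorem stmt_19 {n p : ℕ} (hn : 0 < n) (hp : 0 < p)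
    (B₀ P : Matrix (Fin n) (Fin n) ℝ)
    (hB₀ : B₀.PosDef) (hP : P.PosSemidef) (hPsing : lamn P = 0)
    (H : Matrix (Fin p) (Fin n) ℝ) (f : Fin p → Fin n) (hf : Function.Injective f)
    (hH : H = Matrix.of fun i j => if f i = j then (1 : ℝ) else 0)
    (σR : ℝ) (hσ : 0 < σR) (β : ℝ) (hβ0 : 0 ≤ β) (hβ1 : β < 1) :
    condNum (((1 - β) • B₀ + β • P)⁻¹ +
        Hᵀ * ((σR ^ 2) • (1 : Matrix (Fin p) (Fin p) ℝ))⁻¹ * H)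
      ≤ condNum B₀ * (1 + β * lam1 P / ((1 - β) * lam1 B₀)) +
          ((1 - β) * lam1 B₀ + β * lam1 P) / σR ^ 2 := by
  have h1β : 0 < 1 - β := by linarith
  set B : Matrix (Fin n) (Fin n) ℝ := (1 - β) • B₀ + β • P with hBdef
  have hσ2 : (0:ℝ) < σR ^ 2 := pow_pos hσ 2
  have hσ2' : (σR:ℝ) ^ 2 ≠ 0 := ne_of_gt hσ2
  -- B is Hermitian and positive definite
  have hBher : B.IsHermitian := by
    unfold Matrix.IsHermitian
    rw [hBdef, conjTranspose_add, conjTranspose_smul, conjTranspose_smul,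
      hB₀.1.eq, hP.1.eq, star_trivial, star_trivial]
  have quadB : ∀ x : Fin n → ℝ, x ⬝ᵥ B *ᵥ x
      = (1 - β) * (x ⬝ᵥ B₀ *ᵥ x) + β * (x ⬝ᵥ P *ᵥ x) := by
    intro x
    rw [hBdef, add_mulVec, smul_mulVec, smul_mulVec, dotProduct_add,
      dotProduct_smul, dotProduct_smul, smul_eq_mul, smul_eq_mul]
  have hB : B.PosDef := by
    refine Matrix.PosDef.of_dotProduct_mulVec_pos hBher fun x hx => ?_
    have h0 : 0 < x ⬝ᵥ B₀ *ᵥ x := by simpa using hB₀.dotProduct_mulVec_pos hx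
    have h1 : 0 ≤ x ⬝ᵥ P *ᵥ x := by simpa using hP.dotProduct_mulVec_nonneg x
    have : 0 < x ⬝ᵥ B *ᵥ x := by
      rw [quadB]
      exact add_pos_of_pos_of_nonneg (mul_pos h1β h0) (mul_nonneg hβ0 h1)
    simpa using this
  -- rewrite the observation term
  have hRinv : ((σR ^ 2) • (1 : Matrix (Fin p) (Fin p) ℝ))⁻¹
      = (σR ^ 2)⁻¹ • (1 : Matrix (Fin p) (Fin p) ℝ) := by
    apply Matrix.inv_eq_right_inv
    rw [Matrix.smul_mul, Matrix.mul_smul, one_mul, smul_smul,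
      mul_inv_cancel₀ hσ2', one_smul]
  have hM : Hᵀ * ((σR ^ 2) • (1 : Matrix (Fin p) (Fin p) ℝ))⁻¹ * H
      = (σR ^ 2)⁻¹ • (Hᵀ * H) := by
    rw [hRinv, Matrix.mul_smul, Matrix.mul_one, Matrix.smul_mul]
  have hHv : ∀ x : Fin n → ℝ, H *ᵥ x = fun i => x (f i) := by
    intro x
    funext i
    subst hH
    simp [Matrix.mulVec, dotProduct, ite_mul]
  have quadHtH : ∀ x : Fin n → ℝ, x ⬝ᵥ (Hᵀ * H) *ᵥ x = (H *ᵥ x) ⬝ᵥ (H *ᵥ x) := by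
    intro x
    rw [← Matrix.mulVec_mulVec, Matrix.dotProduct_mulVec, Matrix.vecMul_transpose]
  have hHle : ∀ x : Fin n → ℝ, (H *ᵥ x) ⬝ᵥ (H *ᵥ x) ≤ x ⬝ᵥ x := by
    intro x
    rw [hHv x]
    show ∑ i, x (f i) * x (f i) ≤ x ⬝ᵥ x
    rw [dotProduct]
    calc ∑ i, x (f i) * x (f i)
        = ∑ j ∈ Finset.univ.image f, x j * x j :=
          (Finset.sum_image (f := fun j => x j * x j) (g := f) (fun a _ b _ h => hf h)).symm
      _ ≤ ∑ j, x j * x j :=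
          Finset.sum_le_sum_of_subset_of_nonneg (Finset.subset_univ _)
            (fun j _ _ => mul_self_nonneg _)
  have hMher : ((σR ^ 2)⁻¹ • (Hᵀ * H)).IsHermitian := by
    unfold Matrix.IsHermitian
    rw [conjTranspose_smul, conjTranspose_mul, conjTranspose_eq_transpose_of_trivial,
      conjTranspose_eq_transpose_of_trivial, transpose_transpose, star_trivial]
  have hMpsd : ((σR ^ 2)⁻¹ • (Hᵀ * H)).PosSemidef := by
    refine Matrix.PosSemidef.of_dotProduct_mulVec_nonneg hMher fun x => ?_
    have : 0 ≤ x ⬝ᵥ ((σR ^ 2)⁻¹ • (Hᵀ * H)) *ᵥ x := by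
      rw [smul_mulVec, dotProduct_smul, smul_eq_mul, quadHtH]
      exact mul_nonneg (inv_nonneg.mpr hσ2.le) (dp_self_nonneg _)
    simpa using this
  rw [hM]
  set S : Matrix (Fin n) (Fin n) ℝ := B⁻¹ + (σR ^ 2)⁻¹ • (Hᵀ * H) with hSdef
  have hBi : B⁻¹.PosDef := hB.inv
  have hS : S.PosDef := hBi.add_posSemidef hMpsd
  have quadS : ∀ x : Fin n → ℝ, x ⬝ᵥ S *ᵥ x
      = x ⬝ᵥ B⁻¹ *ᵥ x + (σR ^ 2)⁻¹ * ((H *ᵥ x) ⬝ᵥ (H *ᵥ x)) := by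
    intro x
    rw [hSdef, add_mulVec, dotProduct_add, smul_mulVec, dotProduct_smul,
      smul_eq_mul, quadHtH]
  -- positivity of the various spectral quantities
  have hc1 : 0 < lam1 B₀ := spec_pos hB₀ (lam1_mem hn hB₀.1)
  have hcn : 0 < lamn B₀ := spec_pos hB₀ (lamn_mem hn hB₀.1)
  have hp1 : 0 ≤ lam1 P := hPsing ▸ lamn_le (lam1_mem hn hP.1)
  have hb1 : 0 < lam1 B := spec_pos hB (lam1_mem hn hBher)
  have hbn : 0 < lamn B := spec_pos hB (lamn_mem hn hBher)
  have hi1 : 0 < lam1 B⁻¹ := spec_pos hBi (lam1_mem hn hBi.1)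
  have hin : 0 < lamn B⁻¹ := spec_pos hBi (lamn_mem hn hBi.1)
  have hs1 : 0 < lam1 S := spec_pos hS (lam1_mem hn hS.1)
  have hsn : 0 < lamn S := spec_pos hS (lamn_mem hn hS.1)
  -- bound the extreme eigenvalues of B
  have hb1le : lam1 B ≤ (1 - β) * lam1 B₀ + β * lam1 P := by
    apply lam1_le_of_quad hn hBher
    intro x
    rw [quadB]
    calc (1 - β) * (x ⬝ᵥ B₀ *ᵥ x) + β * (x ⬝ᵥ P *ᵥ x)
        ≤ (1 - β) * (lam1 B₀ * (x ⬝ᵥ x)) + β * (lam1 P * (x ⬝ᵥ x)) :=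
          add_le_add
            (mul_le_mul_of_nonneg_left (quad_le_lam1 hn hB₀.1 x) h1β.le)
            (mul_le_mul_of_nonneg_left (quad_le_lam1 hn hP.1 x) hβ0)
      _ = ((1 - β) * lam1 B₀ + β * lam1 P) * (x ⬝ᵥ x) := by ring
  have hbnge : (1 - β) * lamn B₀ ≤ lamn B := by
    apply le_lamn_of_quad hn hBher
    intro x
    rw [quadB]
    have h1 : 0 ≤ x ⬝ᵥ P *ᵥ x := by simpa using hP.dotProduct_mulVec_nonneg x
    calc ((1 - β) * lamn B₀) * (x ⬝ᵥ x)
        = (1 - β) * (lamn B₀ * (x ⬝ᵥ x)) := by ring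
      _ ≤ (1 - β) * (x ⬝ᵥ B₀ *ᵥ x) :=
          mul_le_mul_of_nonneg_left (lamn_le_quad hn hB₀.1 x) h1β.le
      _ ≤ (1 - β) * (x ⬝ᵥ B₀ *ᵥ x) + β * (x ⬝ᵥ P *ᵥ x) := by
          nlinarith [mul_nonneg hβ0 h1]
  -- bound the extreme eigenvalues of S
  have hs1le : lam1 S ≤ lam1 B⁻¹ + (σR ^ 2)⁻¹ := by
    apply lam1_le_of_quad hn hS.1
    intro x
    rw [quadS]
    calc x ⬝ᵥ B⁻¹ *ᵥ x + (σR ^ 2)⁻¹ * ((H *ᵥ x) ⬝ᵥ (H *ᵥ x))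
        ≤ lam1 B⁻¹ * (x ⬝ᵥ x) + (σR ^ 2)⁻¹ * (x ⬝ᵥ x) :=
          add_le_add (quad_le_lam1 hn hBi.1 x)
            (mul_le_mul_of_nonneg_left (hHle x) (inv_nonneg.mpr hσ2.le))
      _ = (lam1 B⁻¹ + (σR ^ 2)⁻¹) * (x ⬝ᵥ x) := by ring
  have hsnge : lamn B⁻¹ ≤ lamn S := by
    apply le_lamn_of_quad hn hS.1
    intro x
    rw [quadS]
    have : 0 ≤ (σR ^ 2)⁻¹ * ((H *ᵥ x) ⬝ᵥ (H *ᵥ x)) :=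
      mul_nonneg (inv_nonneg.mpr hσ2.le) (dp_self_nonneg _)
    linarith [lamn_le_quad hn hBi.1 x]
  -- relate eigenvalues of B⁻¹ to those of B
  have hBB : B * B⁻¹ = 1 :=
    Matrix.mul_nonsing_inv B (isUnit_iff_ne_zero.mpr (ne_of_gt hB.det_pos))
  have hinv_eig : ∀ μ : ℝ, 0 < μ → μ ∈ spectrum ℝ B⁻¹ → μ⁻¹ ∈ spectrum ℝ B := by
    intro μ hμpos hμ
    obtain ⟨v, hv, hv1⟩ := mem_spec_iff.mp hμ
    have h2 : B *ᵥ (B⁻¹ *ᵥ v) = v := by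
      rw [Matrix.mulVec_mulVec, hBB, Matrix.one_mulVec]
    rw [hv1, Matrix.mulVec_smul] at h2
    have h3 : B *ᵥ v = μ⁻¹ • v := by
      have h4 := congrArg (fun w => μ⁻¹ • w) h2
      simpa [smul_smul, inv_mul_cancel₀ (ne_of_gt hμpos)] using h4
    exact mem_spec_iff.mpr ⟨v, hv, h3⟩
  have hi1le : lam1 B⁻¹ ≤ (lamn B)⁻¹ := by
    have h1 : lamn B ≤ (lam1 B⁻¹)⁻¹ :=
      lamn_le (hinv_eig _ hi1 (lam1_mem hn hBi.1))
    have h3 : lamn B * lam1 B⁻¹ ≤ 1 := by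
      have h4 := mul_le_mul_of_nonneg_right h1 hi1.le
      rwa [inv_mul_cancel₀ (ne_of_gt hi1)] at h4
    have h5 : lam1 B⁻¹ ≤ 1 / lamn B :=
      (le_div_iff₀ hbn).mpr ((mul_comm (lamn B) (lam1 B⁻¹)) ▸ h3)
    simpa [one_div] using h5
  have hinge : (lam1 B)⁻¹ ≤ lamn B⁻¹ := by
    have h1 : (lamn B⁻¹)⁻¹ ≤ lam1 B :=
      le_lam1 (hinv_eig _ hin (lamn_mem hn hBi.1))
    have h3 : 1 ≤ lam1 B * lamn B⁻¹ := by
      have h4 := mul_le_mul_of_nonneg_right h1 hin.le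
      rwa [inv_mul_cancel₀ (ne_of_gt hin)] at h4
    have h5 : 1 / lam1 B ≤ lamn B⁻¹ :=
      (div_le_iff₀ hb1).mpr ((mul_comm (lam1 B) (lamn B⁻¹)) ▸ h3)
    simpa [one_div] using h5
  -- final arithmetic
  set N : ℝ := (1 - β) * lam1 B₀ + β * lam1 P with hNdef
  have hN0 : 0 ≤ N := by positivity
  have hRHS : condNum B₀ * (1 + β * lam1 P / ((1 - β) * lam1 B₀))
      = N / ((1 - β) * lamn B₀) := by
    unfold condNum
    rw [hNdef]
    field_simp
  have hsn' : (lam1 B)⁻¹ ≤ lamn S := le_trans hinge hsnge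
  have hone : 1 ≤ lam1 B * lamn S := by
    have h4 := mul_le_mul_of_nonneg_left hsn' hb1.le
    rwa [mul_inv_cancel₀ (ne_of_gt hb1)] at h4
  have hstep1 : lam1 S / lamn S ≤ lam1 S * lam1 B := by
    rw [div_le_iff₀ hsn]
    calc lam1 S = lam1 S * 1 := (mul_one _).symm
      _ ≤ lam1 S * (lam1 B * lamn S) := mul_le_mul_of_nonneg_left hone hs1.le
      _ = lam1 S * lam1 B * lamn S := by ring
  have hstep2 : lam1 S * lam1 B ≤ ((lamn B)⁻¹ + (σR ^ 2)⁻¹) * lam1 B :=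
    mul_le_mul_of_nonneg_right (hs1le.trans (add_le_add_left hi1le _)) hb1.le
  have hstep3 : ((lamn B)⁻¹ + (σR ^ 2)⁻¹) * lam1 B = lam1 B / lamn B + lam1 B / σR ^ 2 := by
    ring
  have hstep4 : lam1 B / lamn B ≤ N / ((1 - β) * lamn B₀) :=
    div_le_div₀ hN0 hb1le (by positivity) hbnge
  have hstep5 : lam1 B / σR ^ 2 ≤ N / σR ^ 2 := by gcongr
  calc condNum S = lam1 S / lamn S := rfl
    _ ≤ lam1 S * lam1 B := hstep1
    _ ≤ ((lamn B)⁻¹ + (σR ^ 2)⁻¹) * lam1 B := hstep2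
    _ = lam1 B / lamn B + lam1 B / σR ^ 2 := hstep3
    _ ≤ N / ((1 - β) * lamn B₀) + N / σR ^ 2 := add_le_add hstep4 hstep5
    _ = condNum B₀ * (1 + β * lam1 P / ((1 - β) * lam1 B₀)) + N / σR ^ 2 := by rw [hRHS]
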